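/- arXiv:1901.06993 — 3 statements merged into one kernel-verified Lean document; each statement's English description precedes it below -/
import Mathlib

section
/- Let f : X ⥤ Y be a functor between small categories and let D be any category. Then the functor category Fun(∫_contra(f), D) is equivalent to the comma category Comma(f^*, 𝟭_{Fun(X,D)}), whose objects are triples (N, M, η) with N : Y ⥤ D, M : X ⥤ D and η : f ⋙ N ⟶ M a natural transformation, where f^* : Fun(Y, D) ⥤ Fun(X, D) is the restriction functor given by precomposition with f. -/
/-!
STATEMENT 8: For a functor `f : X ⥤ Y` between small categories and any category `D`, the
functor category `Fun(∫_contra(f), D)` is equivalent to the comma category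
`Comma(f^*, 𝟭_{Fun(X,D)})`, where `f^* : Fun(Y,D) ⥤ Fun(X,D)` is precomposition with `f`.
-/

open CategoryTheory

universe v₁ u₁ u

namespace BGP

/-- The vertex set of the `Δ¹` quiver: `false` is the source, `true` is the sink. -/
def AVert : Type := Bool

/-- Hom types of the `Δ¹` quiver: one arrow from `false` to `true`. -/
def aHom : Bool → Bool → Type
  | false, true => PUnit
  | _, _ => PEmpty

instance : Quiver.{0} AVert := ⟨fun a b => aHom a b⟩

variable {X Y : Type u} [SmallCategory X] [SmallCategory Y]

/-- The componentwise-opposite of the `Δ¹`-shaped diagram of small categories corresponding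
to a functor `f : X ⥤ Y`. -/
def aPrefunctorOp (f : X ⥤ Y) : Prefunctor AVert Cat.{u, u} where
  obj v := match v with
    | false => Cat.of Xᵒᵖ
    | true => Cat.of Yᵒᵖ
  map {v w} a := match v, w, a with
    | false, true, _ => (f.op.toCatHom : Cat.of Xᵒᵖ ⟶ Cat.of Yᵒᵖ)
    | false, false, a => a.elim
    | true, false, a => a.elim
    | true, true, a => a.elim

/-- The contravariant Grothendieck construction `∫_contra(f)`: its objects are the disjoint
union of the objects of `X` and of `Y`; morphisms within `X` resp. `Y` are those of `X` resp.
`Y`; morphisms from `y` to `x` are morphisms `y → f(x)` in `Y`; there are no morphisms from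
`X` to `Y`. It is realised as the opposite of the covariant Grothendieck construction of the
componentwise-opposite diagram. -/
abbrev AContraGroth (f : X ⥤ Y) : Type u :=
  (Grothendieck (Paths.lift (aPrefunctorOp f)))ᵒᵖ

def vF : AVert := false
def vT : AVert := true
def arr : vF ⟶ vT := show aHom false true from PUnit.unit

lemma hom_to_vF_elim : ∀ {c : AVert} (_ : c ⟶ vF), False :=
  fun {c} e => match c, e with
    | false, e => PEmpty.elim e
    | true, e => PEmpty.elim e

lemma hom_from_vT_elim : ∀ {c : AVert} (_ : vT ⟶ c), False :=
  fun {c} e => match c, e with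
    | false, e => PEmpty.elim e
    | true, e => PEmpty.elim e

lemma hom_ft_eq (e : vF ⟶ vT) : e = arr :=
  match e with | PUnit.unit => rfl

lemma path_ff (p : Quiver.Path vF vF) : p = Quiver.Path.nil := by
  cases p with
  | nil => rfl
  | cons q e => exact (hom_to_vF_elim e).elim

lemma path_tf (p : Quiver.Path vT vF) : False := by
  cases p with
  | cons q e => exact hom_to_vF_elim e

lemma path_tt (p : Quiver.Path vT vT) : p = Quiver.Path.nil := by
  cases p with
  | nil => rfl
  | cons q e =>
    rename_i c
    have h : ∀ (c : AVert) (q : Quiver.Path vT c) (e : c ⟶ vT), False := by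
      intro c
      match c with
      | false => intro q e; exact path_tf q
      | true => intro q e; exact hom_from_vT_elim e
    exact (h c q e).elim

lemma path_ft (p : Quiver.Path vF vT) :
    p = Quiver.Path.nil.cons arr := by
  cases p with
  | cons q e =>
    rename_i c
    have h : ∀ (c : AVert) (q : Quiver.Path vF c) (e : c ⟶ vT),
        Quiver.Path.cons q e = Quiver.Path.nil.cons arr := by
      intro c
      match c with
      | false => intro q e; rw [path_ff q, hom_ft_eq e]; rfl
      | true => intro q e; exact (hom_from_vT_elim e).elim
    exact h c q e

section
variable (f : X ⥤ Y) (D : Type u₁) [Category.{v₁} D]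

abbrev FF : Paths AVert ⥤ Cat.{u,u} := Paths.lift (aPrefunctorOp f)

def pV (b : AVert) : Paths AVert := b

def pArr : pV vF ⟶ pV vT := Quiver.Path.nil.cons arr

lemma FF_map_arr : (FF f).map pArr = (aPrefunctorOp f).map arr := Category.id_comp _

variable (N : Y ⥤ D) (M : X ⥤ D)

def fibD : ∀ b : Paths AVert, ((FF f).obj b : Type u) ⥤ Dᵒᵖ
  | false => M.op
  | true => N.op

def homD (η : f ⋙ N ⟶ M) : ∀ {b b' : Paths AVert} (p : b ⟶ b'),
    fibD f D N M b ⟶ ((FF f).map p).toFunctor ⋙ fibD f D N M b'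
  | false, false, p => eqToHom (by rw [path_ff p]; rfl)
  | false, true, p => NatTrans.op η ≫ eqToHom (by rw [show p = pArr from path_ft p]; rfl)
  | true, false, p => (path_tf p).elim
  | true, true, p => eqToHom (by rw [path_tt p]; rfl)


lemma homD_id (η : f ⋙ N ⟶ M) : ∀ b : Paths AVert,
    homD f D N M η (𝟙 b) = eqToHom (by simp only [CategoryTheory.Functor.map_id]; rfl) := by
  intro b
  match b with
  | false => rfl
  | true => rfl

lemma homD_comp (η : f ⋙ N ⟶ M) : ∀ (b₁ b₂ b₃ : Paths AVert) (p : b₁ ⟶ b₂) (q : b₂ ⟶ b₃),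
    homD f D N M η (p ≫ q) = homD f D N M η p ≫
      Functor.whiskerLeft ((FF f).map p).toFunctor (homD f D N M η q) ≫
      eqToHom (by simp only [Functor.map_comp]; rfl) := by
  intro b₁ b₂ b₃
  match b₁, b₂, b₃ with
  | true, false, _ => intro p q; exact (path_tf p).elim
  | false, true, false => intro p q; exact (path_tf q).elim
  | true, true, false => intro p q; exact (path_tf q).elim
  | false, false, false =>
    intro p q
    obtain rfl := path_ff p
    obtain rfl := path_ff q
    ext x
    simp only [homD, fibD]
    show 𝟙 _ = 𝟙 _ ≫ 𝟙 _ ≫ 𝟙 _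
    simp
  | false, false, true =>
    intro p q
    obtain rfl := path_ff p
    obtain rfl : q = pArr := path_ft q
    ext x
    simp only [homD, fibD]
    show (NatTrans.op η).app x ≫ 𝟙 _ = 𝟙 _ ≫ ((NatTrans.op η).app x ≫ 𝟙 _) ≫ 𝟙 _
    simp
  | false, true, true =>
    intro p q
    obtain rfl : p = pArr := path_ft p
    obtain rfl := path_tt q
    ext x
    simp only [homD, fibD]
    show (NatTrans.op η).app x ≫ 𝟙 _ = ((NatTrans.op η).app x ≫ 𝟙 _) ≫ 𝟙 _ ≫ 𝟙 _
    simp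
  | true, true, true =>
    intro p q
    obtain rfl := path_tt p
    obtain rfl := path_tt q
    ext x
    simp only [homD, fibD]
    show 𝟙 _ = 𝟙 _ ≫ 𝟙 _ ≫ 𝟙 _
    simp


def ED (η : f ⋙ N ⟶ M) : Grothendieck (FF f) ⥤ Dᵒᵖ :=
  Grothendieck.functorFrom (fibD f D N M) (homD f D N M η) (homD_id f D N M η)
    (homD_comp f D N M η)

def PsiObj (η : f ⋙ N ⟶ M) : AContraGroth f ⥤ D := (ED f D N M η).leftOp

abbrev LL : (Y ⥤ D) ⥤ (X ⥤ D) := (Functor.whiskeringLeft X Y D).obj f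

def Psi : Comma (LL f D) (𝟭 (X ⥤ D)) ⥤ (AContraGroth f ⥤ D) where
  obj c := PsiObj f D c.left c.right c.hom
  map {c c'} u :=
    { app := fun k => match k with
        | Opposite.op ⟨false, x⟩ => u.right.app (Opposite.unop x)
        | Opposite.op ⟨true, y⟩ => u.left.app (Opposite.unop y)
      naturality := by
        intro k₁ k₂ h
        induction k₁ using Opposite.rec with | op g₁ => ?_
        induction k₂ using Opposite.rec with | op g₂ => ?_
        obtain ⟨m⟩ := h
        obtain ⟨b₁, x₁⟩ := g₁
        obtain ⟨b₂, x₂⟩ := g₂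
        obtain ⟨p, φ⟩ := m
        match b₁, b₂ with
        | false, true => exact (path_tf p).elim
        | false, false =>
          obtain rfl := path_ff p
          have := u.right.naturality (Opposite.unop φ)
          simp [PsiObj, ED, homD, fibD]
          exact (by simpa only [Category.comp_id] using this :
            (c.right.map (Opposite.unop φ) ≫ 𝟙 _) ≫ _ = _ ≫ (c'.right.map (Opposite.unop φ) ≫ 𝟙 _))
        | true, false =>
          obtain rfl : p = pArr := path_ft p
          have hw := NatTrans.congr_app u.w (Opposite.unop x₂)
          simp [PsiObj, ED, homD, fibD, NatTrans.op, eqToHom_app] at hw ⊢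
          refine (?_ : (c.left.map (show Opposite.unop x₁ ⟶ f.obj (Opposite.unop x₂) from φ.unop) ≫
              𝟙 _ ≫ c.hom.app _) ≫ u.right.app _ =
            u.left.app _ ≫ c'.left.map (show Opposite.unop x₁ ⟶ f.obj (Opposite.unop x₂) from φ.unop) ≫
              𝟙 _ ≫ c'.hom.app _)
          simp only [Category.id_comp, Category.assoc]
          rw [← hw, ← Category.assoc, ← Category.assoc]
          congr 1
          exact u.left.naturality
            (show Opposite.unop x₁ ⟶ f.obj (Opposite.unop x₂) from φ.unop)
        | true, true =>
          obtain rfl := path_tt p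
          have := u.left.naturality (Opposite.unop φ)
          simp [PsiObj, ED, homD, fibD]
          exact (by simpa only [Category.comp_id] using this :
            (c.left.map (Opposite.unop φ) ≫ 𝟙 _) ≫ _ = _ ≫ (c'.left.map (Opposite.unop φ) ≫ 𝟙 _)) }
  map_id c := by
    apply NatTrans.ext
    funext k
    induction k using Opposite.rec with | op g => ?_
    obtain ⟨b, x⟩ := g
    match b with
    | false => rfl
    | true => rfl
  map_comp u v := by
    apply NatTrans.ext
    funext k
    induction k using Opposite.rec with | op g => ?_
    obtain ⟨b, x⟩ := g
    match b with
    | false => rfl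
    | true => rfl


/-- Fiber morphism over `true`. -/
def fibMorT {y y' : Y} (v : y ⟶ y') :
    (⟨pV vT, Opposite.op y'⟩ : Grothendieck (FF f)) ⟶ ⟨pV vT, Opposite.op y⟩ :=
  ⟨𝟙 _, show Opposite.op y' ⟶ Opposite.op y from v.op⟩

/-- Fiber morphism over `false`. -/
def fibMorF {x x' : X} (w : x ⟶ x') :
    (⟨pV vF, Opposite.op x'⟩ : Grothendieck (FF f)) ⟶ ⟨pV vF, Opposite.op x⟩ :=
  ⟨𝟙 _, show Opposite.op x' ⟶ Opposite.op x from w.op⟩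

/-- Connecting morphism from the `X` part to the `Y` part. -/
def connMor (x : X) :
    (⟨pV vF, Opposite.op x⟩ : Grothendieck (FF f)) ⟶ ⟨pV vT, Opposite.op (f.obj x)⟩ :=
  ⟨pArr, 𝟙 _⟩

lemma PsiObj_map_fibT (η : (LL f D).obj N ⟶ (𝟭 (X ⥤ D)).obj M) {y y' : Y} (v : y ⟶ y') :
    (PsiObj f D N M η).map (Opposite.op (fibMorT f v)) = N.map v := by
  simp [PsiObj, ED, homD, fibD, fibMorT, eqToHom_app, pV, vT, vF]
  exact Category.comp_id (N.map v)

lemma PsiObj_map_fibF (η : (LL f D).obj N ⟶ (𝟭 (X ⥤ D)).obj M) {x x' : X} (w : x ⟶ x') :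
    (PsiObj f D N M η).map (Opposite.op (fibMorF f w)) = M.map w := by
  simp [PsiObj, ED, homD, fibD, fibMorF, eqToHom_app, pV, vT, vF]
  exact Category.comp_id (M.map w)

lemma PsiObj_map_conn (η : (LL f D).obj N ⟶ (𝟭 (X ⥤ D)).obj M) (x : X) :
    (PsiObj f D N M η).map (Opposite.op (connMor f x)) = η.app x := by
  simp [PsiObj, ED, homD, fibD, connMor, eqToHom_app, NatTrans.op, pV, vT, vF]
  exact (by simp : N.map (𝟙 (f.obj x)) ≫ 𝟙 _ ≫ η.app x = η.app x)


instance : (Psi f D).Faithful where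
  map_injective {c c'} {u v} h := by
    apply CommaMorphism.ext
    · apply NatTrans.ext; funext y
      exact NatTrans.congr_app h (Opposite.op ⟨pV vT, Opposite.op y⟩)
    · apply NatTrans.ext; funext x
      exact NatTrans.congr_app h (Opposite.op ⟨pV vF, Opposite.op x⟩)

instance : (Psi f D).Full where
  map_surjective {c c'} τ := by
    refine ⟨⟨{ app := fun y => τ.app (Opposite.op ⟨pV vT, Opposite.op y⟩),
               naturality := ?_ },
             { app := fun x => τ.app (Opposite.op ⟨pV vF, Opposite.op x⟩),
               naturality := ?_ }, ?_⟩, ?_⟩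
    · intro y y' v
      have h := τ.naturality (Opposite.op (fibMorT f v))
      simp only [Psi] at h
      rw [PsiObj_map_fibT, PsiObj_map_fibT] at h
      exact h
    · intro x x' w
      have h := τ.naturality (Opposite.op (fibMorF f w))
      simp only [Psi] at h
      rw [PsiObj_map_fibF, PsiObj_map_fibF] at h
      exact h
    · apply NatTrans.ext; funext x
      have h := τ.naturality (Opposite.op (connMor f x))
      simp only [Psi] at h
      rw [PsiObj_map_conn, PsiObj_map_conn] at h
      exact h.symm
    · apply NatTrans.ext
      funext k
      induction k using Opposite.rec with | op g => ?_
      obtain ⟨b, x⟩ := g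
      match b with
      | false => rfl
      | true => rfl


lemma fibMorT_id (y : Y) : fibMorT f (𝟙 y) = 𝟙 (⟨pV vT, Opposite.op y⟩ : Grothendieck (FF f)) := by
  apply Grothendieck.ext <;> first | (simp [fibMorT]; try exact Category.comp_id _) | rfl

lemma fibMorT_comp {y y' y'' : Y} (v : y ⟶ y') (v' : y' ⟶ y'') :
    fibMorT f (v ≫ v') = fibMorT f v' ≫ fibMorT f v := by
  apply Grothendieck.ext <;> first | (simp [fibMorT]; try rfl) | rfl

lemma fibMorF_id (x : X) : fibMorF f (𝟙 x) = 𝟙 (⟨pV vF, Opposite.op x⟩ : Grothendieck (FF f)) := by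
  apply Grothendieck.ext <;> first | (simp [fibMorF]; try exact Category.comp_id _) | rfl

lemma fibMorF_comp {x x' x'' : X} (w : x ⟶ x') (w' : x' ⟶ x'') :
    fibMorF f (w ≫ w') = fibMorF f w' ≫ fibMorF f w := by
  apply Grothendieck.ext <;> first | (simp [fibMorF]; try rfl) | rfl

lemma conn_natural {x x' : X} (w : x ⟶ x') :
    fibMorF f w ≫ connMor f x = connMor f x' ≫ fibMorT f (f.map w) := by
  apply Grothendieck.ext <;> (try simp [fibMorF, fibMorT, connMor])
  show 𝟙 _ ≫ 𝟙 _ ≫ (f.map w).op ≫ 𝟙 _ = 𝟙 _ ≫ 𝟙 _ ≫ (f.map w).op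
  simp


variable (G : AContraGroth f ⥤ D)

def NG : Y ⥤ D where
  obj y := G.obj (Opposite.op ⟨pV vT, Opposite.op y⟩)
  map {y y'} v := G.map (Opposite.op (fibMorT f v))
  map_id y := by dsimp only []; rw [fibMorT_id]; exact G.map_id _
  map_comp v v' := by dsimp only []; rw [fibMorT_comp, ← G.map_comp]; rfl

def MG : X ⥤ D where
  obj x := G.obj (Opposite.op ⟨pV vF, Opposite.op x⟩)
  map {x x'} w := G.map (Opposite.op (fibMorF f w))
  map_id x := by dsimp only []; rw [fibMorF_id]; exact G.map_id _
  map_comp w w' := by dsimp only []; rw [fibMorF_comp, ← G.map_comp]; rfl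

def etaG : (LL f D).obj (NG f D G) ⟶ (𝟭 (X ⥤ D)).obj (MG f D G) where
  app x := G.map (Opposite.op (connMor f x))
  naturality {x x'} w := by
    dsimp [NG, MG]
    rw [← G.map_comp, ← G.map_comp]
    exact congrArg G.map (congrArg Opposite.op (conn_natural f w).symm)


instance : (Psi f D).EssSurj where
  mem_essImage G := by
    refine ⟨⟨NG f D G, MG f D G, etaG f D G⟩, ⟨NatIso.ofComponents (fun k =>
      match k with
      | Opposite.op ⟨false, x⟩ => Iso.refl _
      | Opposite.op ⟨true, y⟩ => Iso.refl _) ?_⟩⟩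
    intro k₁ k₂ h
    induction k₁ using Opposite.rec with | op g₁ => ?_
    induction k₂ using Opposite.rec with | op g₂ => ?_
    obtain ⟨b₁, x₁⟩ := g₁
    obtain ⟨b₂, x₂⟩ := g₂
    obtain ⟨m⟩ := h
    obtain ⟨p, φ⟩ := m
    match b₁, b₂ with
    | false, true => exact (path_tf p).elim
    | false, false =>
      obtain rfl := path_ff p
      have hm : ({ base := Quiver.Path.nil, fiber := φ } :
          (⟨pV vF, x₂⟩ : Grothendieck (FF f)) ⟶ ⟨pV vF, x₁⟩) = fibMorF f φ.unop := by
        apply Grothendieck.ext <;> (try simp [fibMorF])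
        case w_base => rfl
        case w_fiber => exact Category.id_comp _
      erw [hm]
      simp only [Psi, Iso.refl_hom, Category.comp_id, Category.id_comp]
      erw [show (PsiObj f D (NG f D G) (MG f D G) (etaG f D G)).map
        (Opposite.op (fibMorF f φ.unop)) = (MG f D G).map φ.unop from
        PsiObj_map_fibF f D _ _ _ _]

      exact (Category.comp_id _).trans (Category.id_comp _).symm
    | true, false =>
      obtain rfl : p = pArr := path_ft p
      set ψ : Opposite.unop x₁ ⟶ f.obj (Opposite.unop x₂) :=
        Opposite.unop (show (Opposite.unop x₁ ⟶ f.obj (Opposite.unop x₂))ᵒᵖ from φ) with hψ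
      have hm : ({ base := pArr, fiber := φ } :
          (⟨pV vF, x₂⟩ : Grothendieck (FF f)) ⟶ ⟨pV vT, x₁⟩)
          = connMor f (Opposite.unop x₂) ≫ fibMorT f ψ := by
        apply Grothendieck.ext <;> (try simp [fibMorT, connMor])
        show 𝟙 _ ≫ φ = 𝟙 _ ≫ 𝟙 _ ≫ φ
        simp
      erw [hm]
      have hop : (Opposite.op (connMor f (Opposite.unop x₂) ≫ fibMorT f ψ) :
            Opposite.op (⟨pV vT, x₁⟩ : Grothendieck (FF f)) ⟶
              Opposite.op (⟨pV vF, x₂⟩ : Grothendieck (FF f)))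
          = (fibMorT f ψ).op ≫ (connMor f (Opposite.unop x₂)).op := rfl
      erw [hop]
      erw [Functor.map_comp, Functor.map_comp]
      simp only [Psi, Iso.refl_hom, Category.comp_id, Category.id_comp]
      erw [show (PsiObj f D (NG f D G) (MG f D G) (etaG f D G)).map
        (fibMorT f ψ).op = (NG f D G).map ψ from PsiObj_map_fibT f D _ _ _ _]
      erw [show (PsiObj f D (NG f D G) (MG f D G) (etaG f D G)).map
        (connMor f (Opposite.unop x₂)).op = (etaG f D G).app (Opposite.unop x₂) from
        PsiObj_map_conn f D _ _ _ _]

      exact (Category.comp_id _).trans (Category.id_comp _).symm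
    | true, true =>
      obtain rfl := path_tt p
      have hm : ({ base := Quiver.Path.nil, fiber := φ } :
          (⟨pV vT, x₂⟩ : Grothendieck (FF f)) ⟶ ⟨pV vT, x₁⟩) = fibMorT f φ.unop := by
        apply Grothendieck.ext <;> (try simp [fibMorT])
        case w_base => rfl
        case w_fiber => exact Category.id_comp _
      erw [hm]
      simp only [Psi, Iso.refl_hom, Category.comp_id, Category.id_comp]
      erw [show (PsiObj f D (NG f D G) (MG f D G) (etaG f D G)).map
        (Opposite.op (fibMorT f φ.unop)) = (NG f D G).map φ.unop from
        PsiObj_map_fibT f D _ _ _ _]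

      exact (Category.comp_id _).trans (Category.id_comp _).symm

end

end BGP

open BGP

/-- For a functor `f : X ⥤ Y` between small categories and any category `D`, the functor
category `Fun(∫_contra(f), D)` is equivalent to the comma category `Comma(f^*, 𝟭_{Fun(X,D)})`,
whose objects are triples `(N, M, η : f ⋙ N ⟶ M)`. -/
theorem contraGroth_functorCategory_equiv_comma
    {X Y : Type u} [SmallCategory X] [SmallCategory Y] (f : X ⥤ Y)
    (D : Type u₁) [Category.{v₁} D] :
    Nonempty ((AContraGroth f ⥤ D) ≌ Comma ((Functor.whiskeringLeft X Y D).obj f) (𝟭 (X ⥤ D))) := by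
  have : (BGP.Psi f D).IsEquivalence := { }
  exact ⟨((BGP.Psi f D).asEquivalence).symm⟩
end

section
/- Let Q be a finite bipartite quiver with Q₀ = L ⊔ R, let F be a Q-shaped diagram of small categories, and let D be a category with finite products. Let X = ∐_{l∈L} F(l) and Y = ∐_{r∈R} F(r), so that Fun(X, D) ≅ ∏_{l∈L} Fun(F(l), D) and Fun(Y, D) ≅ ∏_{r∈R} Fun(F(r), D). Define the functor G_F : Fun(Y, D) ⥤ Fun(X, D) by (G_F N)(x) = ∏_{α : l → r} N(F(α)(x)) for x an object of F(l), the product ranging over all arrows of Q with source l. Then the functor category Fun(∫_co F, D) is equivalent to the comma category Comma(𝟭_{Fun(X,D)}, G_F), whose objects are triples (M, N, η : M ⟶ G_F(N)). -/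
/-!
STATEMENT 9: For a finite bipartite quiver `Q` with `Q₀ = L ⊔ R`, a `Q`-shaped diagram `F` of
small categories, and a category `D` with finite products, the functor category
`Fun(∫_co F, D)` is equivalent to the comma category `Comma(𝟭_{Fun(X,D)}, G_F)`, where
`X = ∐_{l∈L} F(l)`, `Y = ∐_{r∈R} F(r)` and `G_F : Fun(Y,D) ⥤ Fun(X,D)` is given by
`(G_F N)(x) = ∏_{α : l → r} N(F(α)(x))` for `x ∈ F(l)`.
-/

open CategoryTheory

universe v₁ u₁ u

namespace BGP

variable {L R : Type u}

/-- The vertex set of the bipartite quiver, tagged with the arrow data. -/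
def BipVert (_Arr : L → R → Type u) : Type u := L ⊕ R

/-- Hom types of the bipartite quiver: all arrows go from `L` to `R`. -/
def bipHom (Arr : L → R → Type u) : L ⊕ R → L ⊕ R → Type u
  | Sum.inl l, Sum.inr r => Arr l r
  | _, _ => PEmpty

instance (Arr : L → R → Type u) : Quiver.{u} (BipVert Arr) :=
  ⟨fun a b => bipHom Arr a b⟩

variable (Arr : L → R → Type u) (FL : L → Cat.{u, u}) (FR : R → Cat.{u, u})

/-- The `Q`-shaped diagram of small categories, as a prefunctor on the bipartite quiver. -/
def bipPrefunctor (Fmap : ∀ ⦃l : L⦄ ⦃r : R⦄, Arr l r → (FL l ⟶ FR r)) :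
    Prefunctor (BipVert Arr) Cat.{u, u} where
  obj v := match v with
    | Sum.inl l => FL l
    | Sum.inr r => FR r
  map {v w} a := match v, w, a with
    | Sum.inl _, Sum.inr _, a => Fmap a
    | Sum.inl _, Sum.inl _, a => a.elim
    | Sum.inr _, Sum.inl _, a => a.elim
    | Sum.inr _, Sum.inr _, a => a.elim

/-- The covariant Grothendieck construction `∫_co F`: objects are pairs `(v, x)` with `v ∈ Q₀`
and `x ∈ F(v)`; morphisms `(v, x) → (v, x')` are morphisms `x → x'` in `F(v)`, and morphisms
`(l, x) → (r, y)` are pairs `(α : l → r, F(α)(x) → y)`. -/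
abbrev CoGroth (Fmap : ∀ ⦃l : L⦄ ⦃r : R⦄, Arr l r → (FL l ⟶ FR r)) : Type u :=
  Grothendieck (Paths.lift (bipPrefunctor Arr FL FR Fmap))

@[simp] lemma sigmaHom_mk_id {I : Type u} {C : I → Type u} [∀ i, Category.{u} (C i)] {i : I}
    (X : C i) :
    CategoryTheory.Sigma.SigmaHom.mk (𝟙 X) = 𝟙 (⟨i, X⟩ : Σ i, C i) := rfl

@[simp] lemma sigmaHom_mk_comp {I : Type u} {C : I → Type u} [∀ i, Category.{u} (C i)] {i : I}
    {X Y Z : C i} (f : X ⟶ Y) (g : Y ⟶ Z) :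
    CategoryTheory.Sigma.SigmaHom.mk (f ≫ g) =
      (CategoryTheory.Sigma.SigmaHom.mk f ≫ CategoryTheory.Sigma.SigmaHom.mk g :
        (⟨i, X⟩ : Σ i, C i) ⟶ ⟨i, Z⟩) := rfl

variable [Fintype R] [∀ l r, Fintype (Arr l r)]
variable (Fmap : ∀ ⦃l : L⦄ ⦃r : R⦄, Arr l r → (FL l ⟶ FR r))
variable (D : Type u₁) [Category.{v₁} D] [Limits.HasFiniteProducts D]

/-- The `l`-component of `G_F N`: the functor `F(l) ⥤ D` sending `x` to
`∏_{α : l → r} N(F(α)(x))`, the product ranging over all arrows of `Q` with source `l`. -/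
noncomputable def GFcomponent (N : (Σ r, (FR r : Type u)) ⥤ D) (l : L) :
    (FL l : Type u) ⥤ D where
  obj x := ∏ᶜ fun p : Σ r, Arr l r => N.obj ⟨p.1, (Fmap p.2).toFunctor.obj x⟩
  map {x y} g := Limits.Pi.map fun p =>
    N.map ((CategoryTheory.Sigma.incl p.1).map ((Fmap p.2).toFunctor.map g))
  map_id x := by simp
  map_comp {x y z} g h := by
    simp [Limits.Pi.map_comp_map]

/-- The functor `G_F : Fun(Y, D) ⥤ Fun(X, D)` with `X = ∐_{l∈L} F(l)` and `Y = ∐_{r∈R} F(r)`,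
given by `(G_F N)(x) = ∏_{α : l → r} N(F(α)(x))` for `x` an object of `F(l)`. -/
noncomputable def GF : ((Σ r, (FR r : Type u)) ⥤ D) ⥤ ((Σ l, (FL l : Type u)) ⥤ D) where
  obj N := CategoryTheory.Sigma.desc fun l => GFcomponent Arr FL FR Fmap D N l
  map {N N'} η :=
    { app := fun x => Limits.Pi.map fun p : Σ r, Arr x.1 r =>
        η.app ⟨p.1, (Fmap p.2).toFunctor.obj x.2⟩
      naturality := by
        rintro ⟨l, a⟩ ⟨l', b⟩ ⟨g⟩
        dsimp [GFcomponent]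
        first
          | (erw [Limits.Pi.map_comp_map, Limits.Pi.map_comp_map]
             congr 1
             funext p
             exact η.naturality _)
          | (apply Limits.Pi.hom_ext; intro p; simp) }
  map_id N := by
    apply NatTrans.ext
    funext x
    simp
    rfl
  map_comp {N N' N''} η θ := by
    apply NatTrans.ext
    funext x
    dsimp
    exact (Limits.Pi.map_comp_map _ _).symm

end BGP

namespace BGPAux

open CategoryTheory Limits BGP

universe w

variable {L R : Type u} {Arr : L → R → Type u}

/-! ### Classification of paths in the bipartite quiver -/

lemma no_path_inr_inl {r : R} {l : L}
    (p : @Quiver.Path (BipVert Arr) _ (Sum.inr r) (Sum.inl l)) : False := by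
  cases p with
  | @cons b _ q e =>
    rcases b with l2 | r2
    · exact e.elim
    · exact e.elim

lemma path_inl_inl {l l' : L}
    (p : @Quiver.Path (BipVert Arr) _ (Sum.inl l) (Sum.inl l')) : l = l' := by
  cases p with
  | nil => rfl
  | @cons b _ q e =>
    rcases b with l2 | r2
    · exact e.elim
    · exact e.elim

lemma path_inl_self {l : L}
    (p : @Quiver.Path (BipVert Arr) _ (Sum.inl l) (Sum.inl l)) : p = Quiver.Path.nil := by
  cases p with
  | nil => rfl
  | @cons b _ q e =>
    rcases b with l2 | r2
    · exact e.elim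
    · exact e.elim

lemma path_inr_inr {r r' : R}
    (p : @Quiver.Path (BipVert Arr) _ (Sum.inr r) (Sum.inr r')) : r = r' := by
  cases p with
  | nil => rfl
  | @cons b _ q e =>
    rcases b with l2 | r2
    · exact (no_path_inr_inl q).elim
    · exact e.elim

lemma path_inr_self {r : R}
    (p : @Quiver.Path (BipVert Arr) _ (Sum.inr r) (Sum.inr r)) : p = Quiver.Path.nil := by
  cases p with
  | nil => rfl
  | @cons b _ q e =>
    rcases b with l2 | r2
    · exact (no_path_inr_inl q).elim
    · exact e.elim

lemma path_inl_inr {l : L} {r : R}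
    (p : @Quiver.Path (BipVert Arr) _ (Sum.inl l) (Sum.inr r)) :
    ∃ e : Arr l r, p = Quiver.Hom.toPath (e : bipHom Arr (Sum.inl l) (Sum.inr r)) := by
  cases p with
  | @cons b _ q e =>
    rcases b with l2 | r2
    · obtain rfl := path_inl_inl q
      obtain rfl := path_inl_self q
      exact ⟨e, rfl⟩
    · exact e.elim

lemma bHom_aux {C B E : Type*} [Category C] [Category B] [Category E] {K K' : C ⥤ B}
    (hK : K = K') {X0 X1 : C ⥤ E} {G H : B ⥤ E} (A : X0 ⟶ X1) (A' : X1 ⟶ K ⋙ G) (β : G ⟶ H)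
    (h1 : K ⋙ G = K' ⋙ G) (h2 : K ⋙ H = K' ⋙ H) :
    (A ≫ A' ≫ eqToHom h1) ≫ Functor.whiskerLeft K' β =
      A ≫ (A' ≫ Functor.whiskerLeft K β) ≫ eqToHom h2 := by
  subst hK
  simp

section Main

variable (Arr : L → R → Type u) (FL : L → Cat.{u, u}) (FR : R → Cat.{u, u})
variable (Fmap : ∀ ⦃l : L⦄ ⦃r : R⦄, Arr l r → (FL l ⟶ FR r))

/-- The base functor `Paths Q₀ ⥤ Cat`. -/
abbrev FF : Paths (BipVert Arr) ⥤ Cat.{u, u} := Paths.lift (bipPrefunctor Arr FL FR Fmap)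

/-- Inclusion of the fiber over `l ∈ L` into the Grothendieck construction. -/
abbrev ιL (l : L) : (FL l : Type u) ⥤ CoGroth Arr FL FR Fmap :=
  Grothendieck.ι (FF Arr FL FR Fmap) (Sum.inl l)

/-- Inclusion of the fiber over `r ∈ R` into the Grothendieck construction. -/
abbrev ιR (r : R) : (FR r : Type u) ⥤ CoGroth Arr FL FR Fmap :=
  Grothendieck.ι (FF Arr FL FR Fmap) (Sum.inr r)

variable {Arr FL FR} in
/-- The morphism `(l, x) ⟶ (r, F(α)(x))` in the Grothendieck construction. -/
def arrMor {l : L} {r : R} (α : Arr l r) (x : FL l) :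
    (ιL Arr FL FR Fmap l).obj x ⟶ (ιR Arr FL FR Fmap r).obj ((Fmap α).toFunctor.obj x) :=
  ⟨Quiver.Hom.toPath (α : bipHom Arr (Sum.inl l) (Sum.inr r)), 𝟙 _⟩

variable {Arr FL FR} in
lemma arrMor_natural {l : L} {r : R} (α : Arr l r) {x y : FL l} (g : x ⟶ y) :
    (ιL Arr FL FR Fmap l).map g ≫ arrMor Fmap α y =
      arrMor Fmap α x ≫ (ιR Arr FL FR Fmap r).map ((Fmap α).toFunctor.map g) := by
  exact (Grothendieck.ιNatTrans (F := FF Arr FL FR Fmap) (X := Sum.inl l) (Y := Sum.inr r)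
    (Quiver.Hom.toPath (α : bipHom Arr (Sum.inl l) (Sum.inr r)))).naturality (X := x) (Y := y) g

variable [Fintype R] [∀ l r, Fintype (Arr l r)]
variable (D : Type u₁) [Category.{v₁} D] [Limits.HasFiniteProducts D]

/-- Object part of the forward functor. -/
noncomputable def fwdObj (K : CoGroth Arr FL FR Fmap ⥤ D) :
    Comma (𝟭 ((Σ l, (FL l : Type u)) ⥤ D)) (GF Arr FL FR Fmap D) where
  left := CategoryTheory.Sigma.desc fun l => ιL Arr FL FR Fmap l ⋙ K
  right := CategoryTheory.Sigma.desc fun r => ιR Arr FL FR Fmap r ⋙ K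
  hom :=
    { app := fun x => Pi.lift fun p : Σ r, Arr x.1 r => K.map (arrMor Fmap p.2 x.2)
      naturality := by
        rintro ⟨l, x⟩ ⟨l', y⟩ ⟨g⟩
        dsimp [GF, GFcomponent, CategoryTheory.Sigma.desc, CategoryTheory.Sigma.descMap]
        ext p
        simp only [Category.assoc, limit.lift_π, Fan.mk_pt, Fan.mk_π_app,
          limMap_π, Discrete.natTrans_app, limit.lift_π_assoc, Pi.lift_π, Pi.lift_π_assoc, Pi.map_π]
        erw [Pi.lift_π, Pi.lift_π_assoc]
        show K.map ((ιL Arr FL FR Fmap l).map g) ≫ K.map (arrMor Fmap p.2 _) =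
          K.map (arrMor Fmap p.2 x) ≫ K.map ((ιR Arr FL FR Fmap p.1).map ((Fmap p.2).toFunctor.map g))
        rw [← Functor.map_comp, ← Functor.map_comp, arrMor_natural] }

/-- The forward functor from `Fun(∫_co F, D)` to the comma category. -/
noncomputable def fwd :
    (CoGroth Arr FL FR Fmap ⥤ D) ⥤
      Comma (𝟭 ((Σ l, (FL l : Type u)) ⥤ D)) (GF Arr FL FR Fmap D) where
  obj K := fwdObj Arr FL FR Fmap D K
  map {K K'} τ :=
    { left := Sigma.natTrans fun l => Functor.whiskerLeft (ιL Arr FL FR Fmap l) τ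
      right := Sigma.natTrans fun r => Functor.whiskerLeft (ιR Arr FL FR Fmap r) τ
      w := by
        apply NatTrans.ext
        funext ⟨l, x⟩
        dsimp [fwdObj, GF, GFcomponent, CategoryTheory.Sigma.natTrans, CategoryTheory.Sigma.desc]
        ext p
        simp only [Category.assoc, limit.lift_π, Fan.mk_pt, Fan.mk_π_app,
          limMap_π, Discrete.natTrans_app, limit.lift_π_assoc]
        erw [Pi.lift_π, Pi.map_π, Pi.lift_π_assoc]
        exact (τ.naturality (arrMor Fmap p.2 x)).symm }
  map_id K := by
    apply CommaMorphism.ext <;>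
      · apply NatTrans.ext; funext ⟨v, x⟩; rfl
  map_comp {K K' K''} τ θ := by
    apply CommaMorphism.ext <;>
      · apply NatTrans.ext; funext ⟨v, x⟩; rfl

section Backward

variable (c : Comma (𝟭 ((Σ l, (FL l : Type u)) ⥤ D)) (GF Arr FL FR Fmap D))

/-- Fiber functors for the backward construction. -/
noncomputable def bFib : ∀ v : Paths (BipVert Arr),
    ((FF Arr FL FR Fmap).obj v : Type u) ⥤ D
  | Sum.inl l => CategoryTheory.Sigma.incl (C := fun l' => (FL l' : Type u)) l ⋙ c.left
  | Sum.inr r => CategoryTheory.Sigma.incl (C := fun r' => (FR r' : Type u)) r ⋙ c.right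

/-- The natural transformation attached to a single edge. -/
noncomputable def bEdge : ∀ {a b : BipVert Arr} (e : a ⟶ b),
    bFib Arr FL FR Fmap D c a ⟶
      ((bipPrefunctor Arr FL FR Fmap).map e).toFunctor ⋙ bFib Arr FL FR Fmap D c b
  | Sum.inl l, Sum.inr r, e =>
    { app := fun x => c.hom.app ⟨l, x⟩ ≫ Pi.π _ (⟨r, e⟩ : Σ r', Arr l r')
      naturality := by
        intro x y g
        have h := c.hom.naturality (CategoryTheory.Sigma.SigmaHom.mk g :
          (⟨l, x⟩ : Σ l', (FL l' : Type u)) ⟶ ⟨l, y⟩)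
        dsimp [GF, GFcomponent, bFib] at h ⊢
        erw [reassoc_of% h]
        exact (congrArg (c.hom.app ⟨l, x⟩ ≫ ·) (Pi.map_π (fun p : Σ r', Arr l r' =>
          c.right.map ((CategoryTheory.Sigma.incl p.1).map ((Fmap p.2).toFunctor.map g)))
          (⟨r, e⟩ : Σ r', Arr l r'))).trans (Category.assoc _ _ _).symm }
  | Sum.inl _, Sum.inl _, e => e.elim
  | Sum.inr _, Sum.inl _, e => e.elim
  | Sum.inr _, Sum.inr _, e => e.elim

/-- The natural transformation attached to a path. -/
noncomputable def bHom {a : Paths (BipVert Arr)} : ∀ {b : Paths (BipVert Arr)} (p : a ⟶ b),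
    bFib Arr FL FR Fmap D c a ⟶
      ((FF Arr FL FR Fmap).map p).toFunctor ⋙ bFib Arr FL FR Fmap D c b
  | _, .nil => eqToHom (by exact (Functor.id_comp _).symm)
  | _, .cons q e =>
    bHom q ≫ Functor.whiskerLeft ((FF Arr FL FR Fmap).map q).toFunctor (bEdge Arr FL FR Fmap D c e)

lemma bHom_id (a : Paths (BipVert Arr)) :
    bHom Arr FL FR Fmap D c (𝟙 a) =
      eqToHom (by simp only [CategoryTheory.Functor.map_id]; rfl) := rfl

lemma bHom_comp {a b e : Paths (BipVert Arr)} (f : a ⟶ b) (g : b ⟶ e) :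
    bHom Arr FL FR Fmap D c (f ≫ g) =
      bHom Arr FL FR Fmap D c f ≫
        Functor.whiskerLeft ((FF Arr FL FR Fmap).map f).toFunctor (bHom Arr FL FR Fmap D c g) ≫
        eqToHom (by simp only [Functor.map_comp]; rfl) := by
  induction g using Quiver.Path.rec with
  | nil =>
    change bHom Arr FL FR Fmap D c f = _
    apply NatTrans.ext
    funext x
    show _ = _ ≫ 𝟙 _ ≫ 𝟙 _
    rw [Category.id_comp, Category.comp_id]
  | cons q ed ih =>
    change bHom Arr FL FR Fmap D c (f ≫ (q : _ ⟶ _)) ≫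
      Functor.whiskerLeft ((FF Arr FL FR Fmap).map (f ≫ (q : _ ⟶ _))).toFunctor
        (bEdge Arr FL FR Fmap D c ed) = _
    rw [ih]
    exact bHom_aux ((congrArg Cat.Hom.toFunctor ((FF Arr FL FR Fmap).map_comp f q)).symm) _ _ _ _ _

/-- The backward construction: a functor `∫_co F ⥤ D` from a comma object. -/
noncomputable def bwdObj : CoGroth Arr FL FR Fmap ⥤ D :=
  Grothendieck.functorFrom (bFib Arr FL FR Fmap D c)
    (fun {a b} f => bHom Arr FL FR Fmap D c f)
    (fun a => bHom_id Arr FL FR Fmap D c a)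
    (fun a b e f g => bHom_comp Arr FL FR Fmap D c f g)

lemma bwd_map_ιL {l : L} {x y : (FL l : Type u)} (g : x ⟶ y) :
    (bwdObj Arr FL FR Fmap D c).map ((ιL Arr FL FR Fmap l).map g) =
      c.left.map (CategoryTheory.Sigma.SigmaHom.mk g) := by
  show 𝟙 _ ≫ c.left.map (CategoryTheory.Sigma.SigmaHom.mk (𝟙 _ ≫ g)) = _
  rw [Category.id_comp, Category.id_comp]

lemma bwd_map_ιR {r : R} {x y : (FR r : Type u)} (g : x ⟶ y) :
    (bwdObj Arr FL FR Fmap D c).map ((ιR Arr FL FR Fmap r).map g) =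
      c.right.map (CategoryTheory.Sigma.SigmaHom.mk g) := by
  show 𝟙 _ ≫ c.right.map (CategoryTheory.Sigma.SigmaHom.mk (𝟙 _ ≫ g)) = _
  rw [Category.id_comp, Category.id_comp]

lemma bwd_map_arrMor {l : L} {r : R} (α : Arr l r) (x : (FL l : Type u)) :
    (bwdObj Arr FL FR Fmap D c).map (arrMor Fmap α x) =
      c.hom.app ⟨l, x⟩ ≫ Pi.π _ (⟨r, α⟩ : Σ r', Arr l r') := by
  show (𝟙 _ ≫ c.hom.app ⟨l, x⟩ ≫ Pi.π _ (⟨r, α⟩ : Σ r', Arr l r')) ≫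
    c.right.map (CategoryTheory.Sigma.SigmaHom.mk (𝟙 _)) = _
  rw [sigmaHom_mk_id, CategoryTheory.Functor.map_id, Category.comp_id, Category.id_comp]

/-- The counit-style isomorphism for essential surjectivity. -/
noncomputable def essIso :
    fwdObj Arr FL FR Fmap D (bwdObj Arr FL FR Fmap D c) ≅ c := by
  refine Comma.isoMk
    (CategoryTheory.Sigma.natIso fun l => NatIso.ofComponents (fun x => Iso.refl _) ?_)
    (CategoryTheory.Sigma.natIso fun r => NatIso.ofComponents (fun x => Iso.refl _) ?_) ?_
  · intro x y g
    exact (Category.comp_id _).trans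
      ((bwd_map_ιL Arr FL FR Fmap D c g).trans (Category.id_comp _).symm)
  · intro x y g
    exact (Category.comp_id _).trans
      ((bwd_map_ιR Arr FL FR Fmap D c g).trans (Category.id_comp _).symm)
  · apply NatTrans.ext
    funext ⟨l, x⟩
    dsimp [fwdObj, GF, GFcomponent]
    apply Pi.hom_ext
    intro p
    obtain ⟨pr, pa⟩ := p
    rw [eq_comm]
    erw [Category.id_comp, Category.assoc, Pi.map_π, Category.comp_id, Pi.lift_π]
    exact bwd_map_arrMor Arr FL FR Fmap D c pa x

end Backward

instance fwd_faithful : (fwd Arr FL FR Fmap D).Faithful where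
  map_injective {K K'} {τ θ} h := by
    apply NatTrans.ext
    funext X
    obtain ⟨v, x⟩ := X
    rcases v with l | r
    · exact NatTrans.congr_app (congrArg CommaMorphism.left h) ⟨l, x⟩
    · exact NatTrans.congr_app (congrArg CommaMorphism.right h) ⟨r, x⟩

lemma fwd_hom_w {K K' : CoGroth Arr FL FR Fmap ⥤ D}
    (h : fwdObj Arr FL FR Fmap D K ⟶ fwdObj Arr FL FR Fmap D K')
    {l : L} {r : R} (α : Arr l r) (x : (FL l : Type u)) :
    h.left.app ⟨l, x⟩ ≫ K'.map (arrMor Fmap α x) =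
      K.map (arrMor Fmap α x) ≫ h.right.app ⟨r, (Fmap α).toFunctor.obj x⟩ := by
  have hw := NatTrans.congr_app h.w ⟨l, x⟩
  dsimp [fwdObj, GF, GFcomponent] at hw
  have hw2 := hw =≫ Pi.π (fun p : Σ r', Arr l r' =>
    K'.obj ((ιR Arr FL FR Fmap p.1).obj ((Fmap p.2).toFunctor.obj x))) ⟨r, α⟩
  erw [Category.assoc, Pi.lift_π, Category.assoc, Pi.map_π, Pi.lift_π_assoc] at hw2
  exact hw2

/-- Components of the preimage natural transformation. -/
def fwdPreimageApp {K K' : CoGroth Arr FL FR Fmap ⥤ D}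
    (h : fwdObj Arr FL FR Fmap D K ⟶ fwdObj Arr FL FR Fmap D K') :
    ∀ X : CoGroth Arr FL FR Fmap, K.obj X ⟶ K'.obj X
  | ⟨Sum.inl l, x⟩ => h.left.app ⟨l, x⟩
  | ⟨Sum.inr r, x⟩ => h.right.app ⟨r, x⟩

instance fwd_full : (fwd Arr FL FR Fmap D).Full where
  map_surjective {K K'} h := by
    refine ⟨{ app := fwdPreimageApp Arr FL FR Fmap D h
              naturality := ?_ }, ?_⟩
    · intro X Y f
      obtain ⟨vx, x⟩ := X
      obtain ⟨vy, y⟩ := Y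
      obtain ⟨p, g⟩ := f
      rcases vx with l | r <;> rcases vy with l' | r'
      · obtain rfl := path_inl_inl p
        obtain rfl := path_inl_self p
        have hf : (⟨Quiver.Path.nil, g⟩ :
            (⟨Sum.inl l, x⟩ : CoGroth Arr FL FR Fmap) ⟶ ⟨Sum.inl l, y⟩) =
            (ιL Arr FL FR Fmap l).map g := by
          refine Grothendieck.ext _ _ rfl ?_
          rfl
        rw [hf]
        exact h.left.naturality (CategoryTheory.Sigma.SigmaHom.mk g)
      · obtain ⟨α, rfl⟩ := path_inl_inr p
        have hf : (⟨Quiver.Hom.toPath α, g⟩ :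
            (⟨Sum.inl l, x⟩ : CoGroth Arr FL FR Fmap) ⟶ ⟨Sum.inr r', y⟩) =
            arrMor Fmap α x ≫ (ιR Arr FL FR Fmap r').map g := by
          refine Grothendieck.ext _ _ rfl ?_
          show 𝟙 _ ≫ g = 𝟙 _ ≫ 𝟙 _ ≫ 𝟙 _ ≫ g
          simp only [Category.id_comp]
        erw [hf, Functor.map_comp, Functor.map_comp, Category.assoc]
        have hb := h.right.naturality (CategoryTheory.Sigma.SigmaHom.mk g :
          (⟨r', (Fmap α).toFunctor.obj x⟩ : Σ r'', (FR r'' : Type u)) ⟶ ⟨r', y⟩)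
        dsimp [fwd, fwdObj, Grothendieck.ι] at hb
        show K.map _ ≫ K.map ((ιR Arr FL FR Fmap r').map g) ≫ h.right.app ⟨r', y⟩ =
          h.left.app ⟨l, x⟩ ≫ _
        dsimp [Grothendieck.ι]
        erw [hb, ← Category.assoc, ← fwd_hom_w Arr FL FR Fmap D h α x, Category.assoc]
        rfl
      · exact (no_path_inr_inl p).elim
      · obtain rfl := path_inr_inr p
        obtain rfl := path_inr_self p
        have hf : (⟨Quiver.Path.nil, g⟩ :
            (⟨Sum.inr r, x⟩ : CoGroth Arr FL FR Fmap) ⟶ ⟨Sum.inr r, y⟩) =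
            (ιR Arr FL FR Fmap r).map g := by
          refine Grothendieck.ext _ _ rfl ?_
          rfl
        rw [hf]
        exact h.right.naturality (CategoryTheory.Sigma.SigmaHom.mk g)
    · apply CommaMorphism.ext
      · apply NatTrans.ext; funext ⟨l, x⟩; rfl
      · apply NatTrans.ext; funext ⟨r, x⟩; rfl

instance fwd_essSurj : (fwd Arr FL FR Fmap D).EssSurj where
  mem_essImage c := ⟨bwdObj Arr FL FR Fmap D c, ⟨essIso Arr FL FR Fmap D c⟩⟩

noncomputable instance fwd_isEquivalence : (fwd Arr FL FR Fmap D).IsEquivalence :=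
  { }

end Main

end BGPAux

open BGP

/-- For a finite bipartite quiver `Q` with `Q₀ = L ⊔ R`, a `Q`-shaped diagram `F` of small
categories, and a category `D` with finite products, the functor category `Fun(∫_co F, D)` is
equivalent to the comma category `Comma(𝟭_{Fun(X,D)}, G_F)`, whose objects are triples
`(M, N, η : M ⟶ G_F(N))`. -/
theorem coGroth_functorCategory_equiv_comma
    {L R : Type u} [Fintype L] [Fintype R]
    (Arr : L → R → Type u) [∀ l r, Fintype (Arr l r)]
    (FL : L → Cat.{u, u}) (FR : R → Cat.{u, u})
    (Fmap : ∀ ⦃l : L⦄ ⦃r : R⦄, Arr l r → (FL l ⟶ FR r))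
    (D : Type u₁) [Category.{v₁} D] [Limits.HasFiniteProducts D] :
    Nonempty ((CoGroth Arr FL FR Fmap ⥤ D) ≌
      Comma (𝟭 ((Σ l, (FL l : Type u)) ⥤ D)) (GF Arr FL FR Fmap D)) :=
  ⟨(BGPAux.fwd Arr FL FR Fmap D).asEquivalence⟩
end

section
/- Let Q be a finite bipartite quiver with Q₀ = L ⊔ R and let F be a Q-shaped diagram of posets, i.e. F assigns to each vertex v a partially ordered set F(v) (regarded as a category) and to each arrow α : l → r a monotone map F(α) : F(l) → F(r). Then every Hom-set of the covariant Grothendieck construction ∫_co F has at most one element (equivalently, ∫_co F is a poset) if and only if for every pair of distinct parallel arrows α, β : l → r in Q and every element x ∈ F(l), the elements F(α)(x) and F(β)(x) have no common upper bound in F(r). -/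
/-!
STATEMENT 11: For a finite bipartite quiver `Q` with `Q₀ = L ⊔ R` and a `Q`-shaped diagram `F`
of posets, every Hom-set of the covariant Grothendieck construction `∫_co F` has at most one
element if and only if for every pair of distinct parallel arrows `α, β : l → r` of `Q` and
every `x ∈ F(l)`, the elements `F(α)(x)` and `F(β)(x)` have no common upper bound in `F(r)`.
-/

open CategoryTheory

universe u

namespace BGP

variable {L R : Type u}

variable (Arr : L → R → Type u) (FL : L → Cat.{u, u}) (FR : R → Cat.{u, u})

variable {Arr} in
/-- A `Q`-shaped diagram of posets, regarded as a diagram of small categories: the fibre over a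
vertex `v` is the poset `F(v)` regarded as a category, and the monotone map `F(α)` attached to
an arrow `α : l → r` is regarded as a functor. -/
def posetDiagram {PL : L → Type u} [∀ l, PartialOrder (PL l)]
    {PR : R → Type u} [∀ r, PartialOrder (PR r)]
    (Fmap : ∀ ⦃l : L⦄ ⦃r : R⦄, Arr l r → (PL l →o PR r)) :
    ∀ ⦃l : L⦄ ⦃r : R⦄, Arr l r → (Cat.of (PL l) ⟶ Cat.of (PR r)) :=
  fun _ _ α => (Fmap α).monotone.functor.toCatHom

lemma path_from_inr {Arr : L → R → Type u} (r : R) : ∀ {b : BipVert Arr}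
    (_ : Quiver.Path (V := BipVert Arr) (Sum.inr r) b), b = Sum.inr r
  | _, Quiver.Path.nil => rfl
  | _, Quiver.Path.cons p e => by
      have h := path_from_inr r p
      subst h
      exact e.elim

lemma path_from_inl {Arr : L → R → Type u} (l : L) : ∀ {b : BipVert Arr}
    (p : Quiver.Path (V := BipVert Arr) (Sum.inl l) b),
    (∃ h : b = (Sum.inl l : BipVert Arr), p = h ▸ Quiver.Path.nil) ∨
    (∃ e : Quiver.Hom (V := BipVert Arr) (Sum.inl l) b, p = e.toPath)
  | _, Quiver.Path.nil => Or.inl ⟨rfl, rfl⟩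
  | b, @Quiver.Path.cons _ _ _ c _ p e => by
      rcases path_from_inl l p with ⟨h, h2⟩ | ⟨e', h2⟩
      · subst h; subst h2; exact Or.inr ⟨e, rfl⟩
      · subst h2
        cases c with
        | inl l' => exact e'.elim
        | inr r' => exact e.elim

end BGP

open BGP

/-- For a finite bipartite quiver `Q` with `Q₀ = L ⊔ R` and a `Q`-shaped diagram of posets `F`,
every Hom-set of `∫_co F` has at most one element (i.e. `∫_co F` is a poset) if and only if
for all distinct parallel arrows `α, β : l → r` of `Q` and every `x ∈ F(l)`, the elements
`F(α)(x)` and `F(β)(x)` have no common upper bound in `F(r)`. -/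
theorem coGroth_poset_iff_no_common_upper_bound
    {L R : Type u} [Fintype L] [Fintype R]
    (Arr : L → R → Type u) [∀ l r, Fintype (Arr l r)]
    (PL : L → Type u) [∀ l, PartialOrder (PL l)]
    (PR : R → Type u) [∀ r, PartialOrder (PR r)]
    (Fmap : ∀ ⦃l : L⦄ ⦃r : R⦄, Arr l r → (PL l →o PR r)) :
    (∀ a b : CoGroth Arr (fun l => Cat.of (PL l)) (fun r => Cat.of (PR r)) (posetDiagram Fmap),
        Subsingleton (a ⟶ b)) ↔
      (∀ (l : L) (r : R) (α β : Arr l r), α ≠ β → ∀ x : PL l,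
        ¬∃ y : PR r, Fmap α x ≤ y ∧ Fmap β x ≤ y) := by
  constructor
  · rintro hsub l r α β hne x ⟨y, hα, hβ⟩
    let a : CoGroth Arr (fun l => Cat.of (PL l)) (fun r => Cat.of (PR r)) (posetDiagram Fmap) :=
      ⟨Sum.inl l, x⟩
    let b : CoGroth Arr (fun l => Cat.of (PL l)) (fun r => Cat.of (PR r)) (posetDiagram Fmap) :=
      ⟨Sum.inr r, y⟩
    let αh : Quiver.Hom (V := BipVert Arr) (Sum.inl l) (Sum.inr r) := α
    let βh : Quiver.Hom (V := BipVert Arr) (Sum.inl l) (Sum.inr r) := β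
    let fibα : (Fmap α x : PR r) ⟶ y := homOfLE hα
    let fibβ : (Fmap β x : PR r) ⟶ y := homOfLE hβ
    let f : a ⟶ b := ⟨αh.toPath, fibα⟩
    let g : a ⟶ b := ⟨βh.toPath, fibβ⟩
    have hfg : f = g := (hsub a b).elim f g
    have hb' : αh.toPath = βh.toPath := congrArg Grothendieck.Hom.base hfg
    have hαβ : αh = βh := by
      unfold Quiver.Hom.toPath at hb'
      injection hb' with h1 h2 h3
    exact hne hαβ
  · intro h a b
    constructor
    intro f g
    obtain ⟨va, xa⟩ := a
    obtain ⟨vb, xb⟩ := b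
    cases va with
    | inr r =>
      have hva := path_from_inr r f.base
      cases vb with
      | inl l' => exact absurd hva (by simp)
      | inr r' =>
        have hva' : (Sum.inr r' : BipVert Arr) = Sum.inr r := hva
        have hrr : r' = r := by injection hva'
        subst hrr
        have pnil : ∀ (p : Quiver.Path (V := BipVert Arr) (Sum.inr r') (Sum.inr r')),
            p = Quiver.Path.nil := by
          intro p
          cases p with
          | nil => rfl
          | cons q e =>
            have := path_from_inr r' q
            subst this
            exact e.elim
        have hbase : f.base = g.base := by rw [pnil f.base, pnil g.base]
        have sub : ∀ (u v : PR r') (f g : u ⟶ v), f = g := fun _ _ _ _ =>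
          Subsingleton.elim _ _
        exact Grothendieck.ext f g hbase (sub _ _ _ _)
    | inl l =>
      cases vb with
      | inl l' =>
        have hbase : f.base = g.base := by
          rcases path_from_inl l f.base with ⟨h1, h2⟩ | ⟨e, _⟩
          · rcases path_from_inl l g.base with ⟨h3, h4⟩ | ⟨e', _⟩
            · rw [h2, h4]
            · exact e'.elim
          · exact e.elim
        have sub : ∀ (u v : PL l') (f g : u ⟶ v), f = g := fun _ _ _ _ =>
          Subsingleton.elim _ _
        exact Grothendieck.ext f g hbase (sub _ _ _ _)
      | inr r =>
        have hbase : f.base = g.base := by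
          rcases path_from_inl l f.base with ⟨h1, _⟩ | ⟨e, he⟩
          · exact absurd h1 (by simp)
          · rcases path_from_inl l g.base with ⟨h3, _⟩ | ⟨e', he'⟩
            · exact absurd h3 (by simp)
            · by_cases heq : e = e'
              · rw [he, he', heq]
              · exfalso
                apply h l r e e' heq xa
                refine ⟨xb, ?_, ?_⟩
                · have hf := f.fiber
                  rw [he] at hf
                  exact leOfHom hf
                · have hg := g.fiber
                  rw [he'] at hg
                  exact leOfHom hg
        have sub : ∀ (u v : PR r) (f g : u ⟶ v), f = g := fun _ _ _ _ =>
          Subsingleton.elim _ _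
        exact Grothendieck.ext f g hbase (sub _ _ _ _)
end
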